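/- Assume ℕA is saturated, i.e. for every x ∈ ℤ^d, if k·x ∈ ℕA for some integer k ≥ 1 then x ∈ ℕA. Then for all a, b ∈ ℤ^d the following are equivalent: (i) a ∼ b; (ii) for every group homomorphism φ : ℤ^d → ℤ with φ(aᵢ) ≥ 0 for all i, one has a ∈ ℕA + G_φ if and only if b ∈ ℕA + G_φ. -/

import Mathlib

/-!
Combinatorial setting: `a₁,…,a_n ∈ ℤ^d` generate `ℤ^d` as a group, `ℕA` is the submonoid
they generate. For a group homomorphism `φ : ℤ^d → ℤ` with `φ(aᵢ) ≥ 0` (encoding a face),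
`M_φ = {x ∈ ℕA : φ x = 0}` and `G_φ` is the subgroup generated by `M_φ`. The relation
`a ∼ b` says: for every such `φ` and every `l ∈ ℤ^d` with `k·l ∈ G_φ` for some `k ≥ 1`,
`a − l ∈ ℕA + G_φ ⟺ b − l ∈ ℕA + G_φ` (i.e. `E_τ(a) = E_τ(b)` for all faces `τ`).
-/

open Pointwise

/-- The submonoid `ℕA` of `ℤ^d` generated by `a₁,…,a_n`. -/
def NA {d n : ℕ} (a : Fin n → Fin d → ℤ) : AddSubmonoid (Fin d → ℤ) :=
  AddSubmonoid.closure (Set.range a)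

/-- The subgroup `G_φ = ℤ(A ∩ τ)` generated by the face `M_φ = {x ∈ ℕA : φ x = 0}`. -/
def Gface {d n : ℕ} (a : Fin n → Fin d → ℤ) (φ : (Fin d → ℤ) →+ ℤ) :
    AddSubgroup (Fin d → ℤ) :=
  AddSubgroup.closure {x | x ∈ NA a ∧ φ x = 0}

/-- The set `ℕA + G_φ ⊆ ℤ^d`. -/
def faceSum {d n : ℕ} (a : Fin n → Fin d → ℤ) (φ : (Fin d → ℤ) →+ ℤ) :
    Set (Fin d → ℤ) :=
  (NA a : Set (Fin d → ℤ)) + (Gface a φ : Set (Fin d → ℤ))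

/-- The relation `x ∼ y`: `E_τ(x) = E_τ(y)` for all faces `τ`. -/
def sim {d n : ℕ} (a : Fin n → Fin d → ℤ) (x y : Fin d → ℤ) : Prop :=
  ∀ φ : (Fin d → ℤ) →+ ℤ, (∀ i, 0 ≤ φ (a i)) →
    ∀ l : Fin d → ℤ, (∃ k : ℕ, 1 ≤ k ∧ (k : ℤ) • l ∈ Gface a φ) →
      (x - l ∈ faceSum a φ ↔ y - l ∈ faceSum a φ)


lemma gface_mem {d n : ℕ} {a : Fin n → Fin d → ℤ} {φ : (Fin d → ℤ) →+ ℤ}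
    {g : Fin d → ℤ} (hg : g ∈ Gface a φ) :
    ∃ p q, (p ∈ NA a ∧ φ p = 0) ∧ (q ∈ NA a ∧ φ q = 0) ∧ g = p - q := by
  induction hg using AddSubgroup.closure_induction with
  | mem z hz => exact ⟨z, 0, hz, ⟨(NA a).zero_mem, map_zero φ⟩, by simp⟩
  | zero => exact ⟨0, 0, ⟨(NA a).zero_mem, map_zero φ⟩, ⟨(NA a).zero_mem, map_zero φ⟩, by simp⟩
  | add z w _ _ hz hw =>
      obtain ⟨p1, q1, hp1, hq1, rfl⟩ := hz
      obtain ⟨p2, q2, hp2, hq2, rfl⟩ := hw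
      exact ⟨p1 + p2, q1 + q2, ⟨(NA a).add_mem hp1.1 hp2.1, by simp [hp1.2, hp2.2]⟩,
        ⟨(NA a).add_mem hq1.1 hq2.1, by simp [hq1.2, hq2.2]⟩, by abel⟩
  | neg z _ hz =>
      obtain ⟨p, q, hp, hq, rfl⟩ := hz
      exact ⟨q, p, hq, hp, by abel⟩

lemma faceSum_add_gface {d n : ℕ} {a : Fin n → Fin d → ℤ} {φ : (Fin d → ℤ) →+ ℤ}
    {z g : Fin d → ℤ} (hz : z ∈ faceSum a φ) (hg : g ∈ Gface a φ) :
    z + g ∈ faceSum a φ := by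
  obtain ⟨m, hm, w, hw, rfl⟩ := hz
  exact ⟨m, hm, w + g, (Gface a φ).add_mem hw hg, by ext i; simp only [Pi.add_apply]; ring⟩

lemma faceSum_nsmul {d n : ℕ} {a : Fin n → Fin d → ℤ} {φ : (Fin d → ℤ) →+ ℤ}
    {z : Fin d → ℤ} (hz : z ∈ faceSum a φ) (k : ℕ) :
    (k : ℤ) • z ∈ faceSum a φ := by
  obtain ⟨m, hm, w, hw, rfl⟩ := hz
  refine ⟨(k : ℤ) • m, ?_, (k : ℤ) • w, (Gface a φ).zsmul_mem hw _, by rw [smul_add]⟩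
  rw [natCast_zsmul]
  exact AddSubmonoid.nsmul_mem _ hm k

lemma faceSum_sat {d n : ℕ} {a : Fin n → Fin d → ℤ}
    (hsat : ∀ x : Fin d → ℤ, (∃ k : ℕ, 1 ≤ k ∧ (k : ℤ) • x ∈ NA a) → x ∈ NA a)
    {φ : (Fin d → ℤ) →+ ℤ} {z : Fin d → ℤ} {k : ℕ} (hk : 1 ≤ k)
    (hz : (k : ℤ) • z ∈ faceSum a φ) : z ∈ faceSum a φ := by
  obtain ⟨m, hm, g, hg, hzeq⟩ := hz
  obtain ⟨p, q, hp, hq, rfl⟩ := gface_mem hg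
  change m + (p - q) = (k : ℤ) • z at hzeq
  have hq' : z + q ∈ NA a := by
    refine hsat _ ⟨k, hk, ?_⟩
    have : (k : ℤ) • (z + q) = m + p + ((k - 1 : ℕ) : ℤ) • q := by
      rw [smul_add, ← hzeq, Nat.cast_sub hk, sub_smul]
      push_cast
      abel
    rw [this, natCast_zsmul]
    exact (NA a).add_mem ((NA a).add_mem hm hp.1) (AddSubmonoid.nsmul_mem _ hq.1 _)
  refine ⟨z + q, hq', -q, (Gface a φ).neg_mem (AddSubgroup.subset_closure hq),
    add_neg_cancel_right z q⟩

lemma faceSum_sub_iff {d n : ℕ} {a : Fin n → Fin d → ℤ}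
    (hsat : ∀ x : Fin d → ℤ, (∃ k : ℕ, 1 ≤ k ∧ (k : ℤ) • x ∈ NA a) → x ∈ NA a)
    {φ : (Fin d → ℤ) →+ ℤ} {l : Fin d → ℤ} {k : ℕ} (hk : 1 ≤ k)
    (hl : (k : ℤ) • l ∈ Gface a φ) (z : Fin d → ℤ) :
    z - l ∈ faceSum a φ ↔ z ∈ faceSum a φ := by
  constructor
  · intro h
    refine faceSum_sat hsat hk ?_
    have := faceSum_add_gface (faceSum_nsmul h k) hl
    have e : (k : ℤ) • (z - l) + (k : ℤ) • l = (k : ℤ) • z := by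
      rw [smul_sub]; abel
    rwa [e] at this
  · intro h
    refine faceSum_sat hsat hk ?_
    have := faceSum_add_gface (faceSum_nsmul h k) ((Gface a φ).neg_mem hl)
    have e : (k : ℤ) • z + -((k : ℤ) • l) = (k : ℤ) • (z - l) := by
      rw [smul_sub]; abel
    rwa [e] at this

/-- If `ℕA` is saturated, then for all `x, y ∈ ℤ^d`: `x ∼ y` iff for
every group homomorphism `φ : ℤ^d → ℤ` with `φ(aᵢ) ≥ 0` for all `i`, one has
`x ∈ ℕA + G_φ ⟺ y ∈ ℕA + G_φ`. -/
theorem sim_iff_same_sector_of_saturated {d n : ℕ} (hd : 0 < d) (hn : 0 < n)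
    (a : Fin n → Fin d → ℤ) (hgen : AddSubgroup.closure (Set.range a) = ⊤)
    (hsat : ∀ x : Fin d → ℤ, (∃ k : ℕ, 1 ≤ k ∧ (k : ℤ) • x ∈ NA a) → x ∈ NA a)
    (x y : Fin d → ℤ) :
    sim a x y ↔
      ∀ φ : (Fin d → ℤ) →+ ℤ, (∀ i, 0 ≤ φ (a i)) →
        (x ∈ faceSum a φ ↔ y ∈ faceSum a φ) := by
  constructor
  · intro h φ hφ
    have := h φ hφ 0 ⟨1, le_refl 1, by simpa using (Gface a φ).zero_mem⟩
    simpa using this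
  · intro h φ hφ l ⟨k, hk, hkl⟩
    rw [faceSum_sub_iff hsat hk hkl x, faceSum_sub_iff hsat hk hkl y]
    exact h φ hφ
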